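/- Let Y be a real Banach space and let X = X₁ ⊕_a X₂ be the absolute sum of real Banach spaces X₁ and X₂ with respect to an absolute norm N which is of type 1 or of type ∞ (so X₁ is an absolute summand of X of type 1 or ∞). If the pair (X₁ ⊕_a X₂, Y) has the Bishop–Phelps–Bollobás property, then the pair (X₁, Y) has the Bishop–Phelps–Bollobás property. -/

import Mathlib

open Filter Topology

/-- `N` is an absolute norm on `ℝ²`: a norm with `N(1,0)=N(0,1)=1` and
`N(s,t)=N(|s|,|t|)`. -/
structure IsAbsoluteNorm (N : ℝ → ℝ → ℝ) : Prop where
  nonneg : ∀ s t : ℝ, 0 ≤ N s t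
  eq_zero_iff : ∀ s t : ℝ, N s t = 0 ↔ s = 0 ∧ t = 0
  triangle : ∀ s₁ t₁ s₂ t₂ : ℝ, N (s₁ + s₂) (t₁ + t₂) ≤ N s₁ t₁ + N s₂ t₂
  smul : ∀ c s t : ℝ, N (c * s) (c * t) = |c| * N s t
  one_zero : N 1 0 = 1
  zero_one : N 0 1 = 1
  abs_eq : ∀ s t : ℝ, N s t = N |s| |t|

namespace IsAbsoluteNorm

variable {N : ℝ → ℝ → ℝ}

lemma fst_zero (hN : IsAbsoluteNorm N) (s : ℝ) : N s 0 = |s| := by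
  have h := hN.smul s 1 0
  simp only [mul_one, mul_zero] at h
  rw [h, hN.one_zero, mul_one]

lemma zero_snd (hN : IsAbsoluteNorm N) (t : ℝ) : N 0 t = |t| := by
  have h := hN.smul t 0 1
  simp only [mul_one, mul_zero] at h
  rw [h, hN.zero_one, mul_one]

lemma mono_right (hN : IsAbsoluteNorm N) {t t' : ℝ} (s : ℝ) (h : |t| ≤ t') : N s t ≤ N s t' := by
  have ht' : 0 ≤ t' := le_trans (abs_nonneg t) h
  rcases eq_or_lt_of_le ht' with h0 | h0
  · have : t = 0 := by
      have := abs_nonneg t; have : |t| = 0 := le_antisymm (h.trans h0.symm.le) (abs_nonneg t)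
      exact abs_eq_zero.mp this
    rw [this, ← h0]
  · have habs : N s (-t') = N s t' := by
      rw [hN.abs_eq s (-t'), abs_neg, ← hN.abs_eq]
    set l : ℝ := (t + t') / (2 * t') with hl
    have hl0 : 0 ≤ l := by
      have : -t' ≤ t := neg_le_of_abs_le h
      apply div_nonneg <;> linarith
    have hl1 : l ≤ 1 := by
      have : t ≤ t' := le_of_abs_le h
      rw [hl, div_le_one (by linarith)]; linarith
    calc N s t = N (l * s + (1 - l) * s) (l * t' + (1 - l) * (-t')) := by
          congr 1
          · ring
          · have hl2 : l * (2 * t') = t + t' := by rw [hl, div_mul_cancel₀ _ (mul_pos two_pos h0).ne']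
            linear_combination -hl2
      _ ≤ N (l * s) (l * t') + N ((1 - l) * s) ((1 - l) * (-t')) := hN.triangle _ _ _ _
      _ = l * N s t' + (1 - l) * N s (-t') := by
          rw [hN.smul, hN.smul, abs_of_nonneg hl0, abs_of_nonneg (by linarith)]
      _ = N s t' := by rw [habs]; ring

lemma mono_left (hN : IsAbsoluteNorm N) {s s' : ℝ} (t : ℝ) (h : |s| ≤ s') : N s t ≤ N s' t := by
  have hs' : 0 ≤ s' := le_trans (abs_nonneg s) h
  rcases eq_or_lt_of_le hs' with h0 | h0
  · have : s = 0 := abs_eq_zero.mp (le_antisymm (h.trans h0.symm.le) (abs_nonneg s))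
    rw [this, ← h0]
  · have habs : N (-s') t = N s' t := by
      rw [hN.abs_eq (-s') t, abs_neg, ← hN.abs_eq]
    set l : ℝ := (s + s') / (2 * s') with hl
    have hl0 : 0 ≤ l := by
      have : -s' ≤ s := neg_le_of_abs_le h
      apply div_nonneg <;> linarith
    have hl1 : l ≤ 1 := by
      have : s ≤ s' := le_of_abs_le h
      rw [hl, div_le_one (by linarith)]; linarith
    calc N s t = N (l * s' + (1 - l) * (-s')) (l * t + (1 - l) * t) := by
          congr 1
          · have hl2 : l * (2 * s') = s + s' := by rw [hl, div_mul_cancel₀ _ (mul_pos two_pos h0).ne']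
            linear_combination -hl2
          · ring
      _ ≤ N (l * s') (l * t) + N ((1 - l) * (-s')) ((1 - l) * t) := hN.triangle _ _ _ _
      _ = l * N s' t + (1 - l) * N (-s') t := by
          rw [hN.smul, hN.smul, abs_of_nonneg hl0, abs_of_nonneg (by linarith)]
      _ = N s' t := by rw [habs]; ring

lemma abs_fst_le (hN : IsAbsoluteNorm N) (s t : ℝ) : |s| ≤ N s t := by
  have h1 : N s 0 ≤ N s |t| := hN.mono_right s (by simp)
  rw [hN.fst_zero] at h1
  calc |s| ≤ N s |t| := h1
    _ = N s t := by rw [hN.abs_eq s |t|, abs_abs, ← hN.abs_eq]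

lemma abs_snd_le (hN : IsAbsoluteNorm N) (s t : ℝ) : |t| ≤ N s t := by
  have h1 : N 0 t ≤ N |s| t := hN.mono_left t (by simp)
  rw [hN.zero_snd] at h1
  calc |t| ≤ N |s| t := h1
    _ = N s t := by rw [hN.abs_eq |s| t, abs_abs, ← hN.abs_eq]

end IsAbsoluteNorm

/-- An absolute norm is of type 1 if `|x| + K|y| ≤ N(x,y)` for some `K > 0`. -/
def AbsNormTypeOne (N : ℝ → ℝ → ℝ) : Prop :=
  ∃ K : ℝ, 0 < K ∧ ∀ x y : ℝ, |x| + K * |y| ≤ N x y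

/-- An absolute norm is of type ∞ if `N(1,b₀) = 1` for some `b₀ > 0`. -/
def AbsNormTypeInfty (N : ℝ → ℝ → ℝ) : Prop :=
  ∃ b₀ : ℝ, 0 < b₀ ∧ N 1 b₀ = 1

/-- The pair `(X, Y)` has the Bishop–Phelps–Bollobás property. -/
def HasBPBp (X Y : Type*) [NormedAddCommGroup X] [NormedSpace ℝ X]
    [NormedAddCommGroup Y] [NormedSpace ℝ Y] : Prop :=
  ∀ ε : ℝ, 0 < ε → ∃ η : ℝ, 0 < η ∧
    ∀ (T : X →L[ℝ] Y) (x₀ : X), ‖T‖ = 1 → ‖x₀‖ = 1 → 1 - η < ‖T x₀‖ →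
      ∃ (S : X →L[ℝ] Y) (x₁ : X),
        ‖S‖ = 1 ∧ ‖x₁‖ = 1 ∧ ‖S x₁‖ = 1 ∧ ‖x₁ - x₀‖ < ε ∧ ‖S - T‖ < ε

theorem bpbp_absolute_summand_domain (X X₁ X₂ Y : Type*)
    [NormedAddCommGroup X] [NormedSpace ℝ X] [CompleteSpace X]
    [NormedAddCommGroup X₁] [NormedSpace ℝ X₁] [CompleteSpace X₁]
    [NormedAddCommGroup X₂] [NormedSpace ℝ X₂] [CompleteSpace X₂]
    [NormedAddCommGroup Y] [NormedSpace ℝ Y] [CompleteSpace Y]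
    (N : ℝ → ℝ → ℝ) (hN : IsAbsoluteNorm N)
    (e : X ≃L[ℝ] X₁ × X₂) (he : ∀ x : X, ‖x‖ = N ‖(e x).1‖ ‖(e x).2‖)
    (htype : AbsNormTypeOne N ∨ AbsNormTypeInfty N)
    (h : HasBPBp X Y) : HasBPBp X₁ Y := by
  intro ε hε
  set δ : ℝ := min ε 1 / 4 with hδdef
  have hδpos : 0 < δ := by
    have : 0 < min ε 1 := lt_min hε one_pos
    positivity
  have hδε : 4 * δ ≤ ε := by
    have : min ε 1 ≤ ε := min_le_left _ _
    rw [hδdef]; linarith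
  have hδ1 : δ ≤ 1 / 4 := by
    have : min ε 1 ≤ 1 := min_le_right _ _
    rw [hδdef]; linarith
  obtain ⟨η, hηpos, hBP⟩ := h δ hδpos
  refine ⟨η, hηpos, ?_⟩
  intro T₁ x₀ hT₁ hx₀ hTx₀
  -- the isometric embedding j : X₁ → X, x ↦ e⁻¹ (x, 0)
  set j : X₁ →L[ℝ] X :=
    (e.symm : X₁ × X₂ →L[ℝ] X).comp (ContinuousLinearMap.inl ℝ X₁ X₂) with hjdef
  have hjapp : ∀ x : X₁, e (j x) = (x, 0) := by
    intro x; simp [hjdef]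
  have hjnorm : ∀ x : X₁, ‖j x‖ = ‖x‖ := by
    intro x
    rw [he (j x), hjapp x]
    simp [hN.fst_zero]
  -- the operator T : X → Y
  set T : X →L[ℝ] Y :=
    T₁.comp ((ContinuousLinearMap.fst ℝ X₁ X₂).comp (e : X →L[ℝ] X₁ × X₂)) with hTdef
  have hTapp : ∀ x : X, T x = T₁ (e x).1 := by intro x; simp [hTdef]
  have hTnorm : ‖T‖ = 1 := by
    apply le_antisymm
    · apply ContinuousLinearMap.opNorm_le_bound _ zero_le_one
      intro x
      rw [hTapp, one_mul]
      calc ‖T₁ (e x).1‖ ≤ ‖T₁‖ * ‖(e x).1‖ := T₁.le_opNorm _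
        _ = ‖(e x).1‖ := by rw [hT₁, one_mul]
        _ ≤ ‖x‖ := by
            rw [he x]
            have := hN.abs_fst_le ‖(e x).1‖ ‖(e x).2‖
            rwa [abs_norm] at this
    · rw [← hT₁]
      apply ContinuousLinearMap.opNorm_le_bound _ (norm_nonneg T)
      intro x
      calc ‖T₁ x‖ = ‖T (j x)‖ := by rw [hTapp, hjapp]
        _ ≤ ‖T‖ * ‖j x‖ := T.le_opNorm _
        _ = ‖T‖ * ‖x‖ := by rw [hjnorm]
  obtain ⟨S, w, hSnorm, hwnorm, hSw, hclose, hST⟩ :=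
    hBP T (j x₀) hTnorm (by rw [hjnorm]; exact hx₀)
      (by rw [hTapp, hjapp]; exact hTx₀)
  set u₁ : X₁ := (e w).1 with hu₁def
  set u₂ : X₂ := (e w).2 with hu₂def
  have hNu : N ‖u₁‖ ‖u₂‖ = 1 := by rw [← he]; exact hwnorm
  have hdiff : e (w - j x₀) = (u₁ - x₀, u₂) := by
    rw [map_sub, hjapp]
    simp [hu₁def, hu₂def, Prod.sub_def]
  have h1 : ‖u₁ - x₀‖ < δ := by
    refine lt_of_le_of_lt ?_ hclose
    rw [he (w - j x₀), hdiff]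
    have := hN.abs_fst_le ‖u₁ - x₀‖ ‖u₂‖
    rwa [abs_norm] at this
  have h2 : ‖u₂‖ < δ := by
    refine lt_of_le_of_lt ?_ hclose
    rw [he (w - j x₀), hdiff]
    have := hN.abs_snd_le ‖u₁ - x₀‖ ‖u₂‖
    rwa [abs_norm] at this
  have h3 : |‖u₁‖ - 1| < δ := by
    have := abs_norm_sub_norm_le u₁ x₀
    rw [hx₀] at this
    exact lt_of_le_of_lt this h1
  have hu₁pos : 0 < ‖u₁‖ := by
    have := abs_lt.mp h3
    linarith
  have hu₁ne : u₁ ≠ 0 := norm_pos_iff.mp hu₁pos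
  obtain ⟨g, hg, hgu₁⟩ := exists_dual_vector ℝ u₁ hu₁pos.ne'
  -- the operator A : X₁ → X
  set A : X₁ →L[ℝ] X := (e.symm : X₁ × X₂ →L[ℝ] X).comp
    ((ContinuousLinearMap.id ℝ X₁).prod (‖u₁‖⁻¹ • g.smulRight u₂)) with hAdef
  have hAapp : ∀ x : X₁, e (A x) = (x, (‖u₁‖⁻¹ * g x) • u₂) := by
    intro x
    simp [hAdef, smul_smul]
  have hAnorm : ∀ x : X₁, ‖u₁‖ * ‖A x‖ ≤ ‖x‖ := by
    intro x
    have hgx : |g x| ≤ ‖x‖ := by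
      calc |g x| = ‖g x‖ := (Real.norm_eq_abs _).symm
        _ ≤ ‖g‖ * ‖x‖ := g.le_opNorm x
        _ = ‖x‖ := by rw [hg, one_mul]
    have : ‖A x‖ = N ‖x‖ (‖u₁‖⁻¹ * |g x| * ‖u₂‖) := by
      rw [he (A x), hAapp x]
      congr 1
      rw [norm_smul, Real.norm_eq_abs, abs_mul, abs_inv, abs_norm]
    rw [this]
    have hmono : N ‖x‖ (‖u₁‖⁻¹ * |g x| * ‖u₂‖) ≤ N ‖x‖ (‖x‖ * ‖u₁‖⁻¹ * ‖u₂‖) := by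
      apply hN.mono_right
      rw [abs_of_nonneg (by positivity)]
      have h0 : (0:ℝ) ≤ ‖u₁‖⁻¹ := by positivity
      calc ‖u₁‖⁻¹ * |g x| * ‖u₂‖ ≤ ‖u₁‖⁻¹ * ‖x‖ * ‖u₂‖ := by
            apply mul_le_mul_of_nonneg_right _ (norm_nonneg u₂)
            exact mul_le_mul_of_nonneg_left hgx h0
        _ = ‖x‖ * ‖u₁‖⁻¹ * ‖u₂‖ := by ring
    have hsc : N ‖x‖ (‖x‖ * ‖u₁‖⁻¹ * ‖u₂‖) = ‖x‖ * ‖u₁‖⁻¹ := by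
      have h' := hN.smul (‖x‖ * ‖u₁‖⁻¹) ‖u₁‖ ‖u₂‖
      rw [abs_of_nonneg (by positivity), hNu, mul_one] at h'
      have hxx : ‖x‖ * ‖u₁‖⁻¹ * ‖u₁‖ = ‖x‖ := by field_simp
      calc N ‖x‖ (‖x‖ * ‖u₁‖⁻¹ * ‖u₂‖)
          = N (‖x‖ * ‖u₁‖⁻¹ * ‖u₁‖) (‖x‖ * ‖u₁‖⁻¹ * ‖u₂‖) := by rw [hxx]
        _ = ‖x‖ * ‖u₁‖⁻¹ := h'
    calc ‖u₁‖ * N ‖x‖ (‖u₁‖⁻¹ * |g x| * ‖u₂‖)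
        ≤ ‖u₁‖ * N ‖x‖ (‖x‖ * ‖u₁‖⁻¹ * ‖u₂‖) :=
          mul_le_mul_of_nonneg_left hmono (le_of_lt hu₁pos)
      _ = ‖u₁‖ * (‖x‖ * ‖u₁‖⁻¹) := by rw [hsc]
      _ = ‖x‖ := by field_simp
  have hAu₁ : A u₁ = w := by
    apply e.injective
    rw [hAapp]
    have : (‖u₁‖⁻¹ * g u₁) • u₂ = u₂ := by
      rw [hgu₁]
      norm_num
      rw [inv_mul_cancel₀ (ne_of_gt hu₁pos), one_smul]
    rw [this]
  -- the operator S₁ and the point x₁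
  set S₁ : X₁ →L[ℝ] Y := ‖u₁‖ • S.comp A with hS₁def
  set x₁ : X₁ := ‖u₁‖⁻¹ • u₁ with hx₁def
  have hS₁app : ∀ x : X₁, S₁ x = ‖u₁‖ • S (A x) := by intro x; simp [hS₁def]
  have hSz : ∀ z : X, ‖S z‖ ≤ ‖z‖ := by
    intro z
    calc ‖S z‖ ≤ ‖S‖ * ‖z‖ := S.le_opNorm z
      _ = ‖z‖ := by rw [hSnorm, one_mul]
  have hS₁le : ∀ x : X₁, ‖S₁ x‖ ≤ ‖x‖ := by
    intro x
    rw [hS₁app, norm_smul, Real.norm_eq_abs, abs_of_nonneg (norm_nonneg u₁)]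
    calc ‖u₁‖ * ‖S (A x)‖ ≤ ‖u₁‖ * ‖A x‖ :=
          mul_le_mul_of_nonneg_left (hSz _) (norm_nonneg u₁)
      _ ≤ ‖x‖ := hAnorm x
  have hx₁norm : ‖x₁‖ = 1 := by
    rw [hx₁def, norm_smul, Real.norm_eq_abs, abs_inv, abs_norm,
      inv_mul_cancel₀ (ne_of_gt hu₁pos)]
  have hS₁x₁ : S₁ x₁ = S w := by
    rw [hS₁app, hx₁def, map_smul, map_smul, smul_smul,
      mul_inv_cancel₀ (ne_of_gt hu₁pos), one_smul, hAu₁]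
  have hS₁norm : ‖S₁‖ = 1 := by
    apply le_antisymm
    · apply ContinuousLinearMap.opNorm_le_bound _ zero_le_one
      intro x; rw [one_mul]; exact hS₁le x
    · have : ‖S₁ x₁‖ ≤ ‖S₁‖ * ‖x₁‖ := S₁.le_opNorm x₁
      rw [hS₁x₁, hSw, hx₁norm, mul_one] at this
      exact this
  refine ⟨S₁, x₁, hS₁norm, hx₁norm, by rw [hS₁x₁]; exact hSw, ?_, ?_⟩
  · -- ‖x₁ - x₀‖ < ε
    have hd : x₁ - u₁ = (‖u₁‖⁻¹ - 1) • u₁ := by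
      rw [hx₁def, sub_smul, one_smul]
    have : ‖x₁ - u₁‖ = |1 - ‖u₁‖| := by
      rw [hd, norm_smul, Real.norm_eq_abs]
      rw [← abs_norm u₁, ← abs_mul]
      congr 1
      field_simp
      rw [abs_norm]; ring
    calc ‖x₁ - x₀‖ ≤ ‖x₁ - u₁‖ + ‖u₁ - x₀‖ := norm_sub_le_norm_sub_add_norm_sub _ _ _
      _ = |1 - ‖u₁‖| + ‖u₁ - x₀‖ := by rw [this]
      _ < δ + δ := by
          rw [abs_sub_comm] at h3
          exact add_lt_add h3 h1
      _ < ε := by linarith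
  · -- ‖S₁ - T₁‖ < ε
    have hkey : ∀ x : X₁, ‖S₁ x - T₁ x‖ ≤ 3 * δ * ‖x‖ := by
      intro x
      have hT₁x : T₁ x = T (j x) := by rw [hTapp, hjapp]
      have hsplit : S₁ x - T₁ x =
          ‖u₁‖ • (S (A x) - S (j x)) + (‖u₁‖ - 1) • S (j x) + (S (j x) - T (j x)) := by
        rw [hS₁app, hT₁x, smul_sub, sub_smul, one_smul]
        abel
      have hgx : |g x| ≤ ‖x‖ := by
        calc |g x| = ‖g x‖ := (Real.norm_eq_abs _).symm
          _ ≤ ‖g‖ * ‖x‖ := g.le_opNorm x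
          _ = ‖x‖ := by rw [hg, one_mul]
      -- term 1
      have ht1 : ‖‖u₁‖ • (S (A x) - S (j x))‖ ≤ δ * ‖x‖ := by
        have hAj : e (A x - j x) = (0, (‖u₁‖⁻¹ * g x) • u₂) := by
          rw [map_sub, hAapp, hjapp, Prod.sub_def]
          simp
        have hAjnorm : ‖A x - j x‖ = ‖u₁‖⁻¹ * |g x| * ‖u₂‖ := by
          rw [he (A x - j x), hAj]
          simp only [norm_zero]
          rw [hN.zero_snd, abs_norm, norm_smul, Real.norm_eq_abs, abs_mul, abs_inv,
            abs_norm]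
        rw [norm_smul, Real.norm_eq_abs, abs_of_nonneg (norm_nonneg u₁), ← map_sub]
        calc ‖u₁‖ * ‖S (A x - j x)‖ ≤ ‖u₁‖ * ‖A x - j x‖ :=
              mul_le_mul_of_nonneg_left (hSz _) (norm_nonneg u₁)
          _ = ‖u₁‖ * (‖u₁‖⁻¹ * |g x| * ‖u₂‖) := by rw [hAjnorm]
          _ = |g x| * ‖u₂‖ := by field_simp
          _ ≤ ‖x‖ * ‖u₂‖ := mul_le_mul_of_nonneg_right hgx (norm_nonneg u₂)
          _ ≤ ‖x‖ * δ := mul_le_mul_of_nonneg_left (le_of_lt h2) (norm_nonneg x)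
          _ = δ * ‖x‖ := by ring
      -- term 2
      have ht2 : ‖(‖u₁‖ - 1) • S (j x)‖ ≤ δ * ‖x‖ := by
        rw [norm_smul, Real.norm_eq_abs]
        calc |‖u₁‖ - 1| * ‖S (j x)‖ ≤ δ * ‖S (j x)‖ :=
              mul_le_mul_of_nonneg_right (le_of_lt h3) (norm_nonneg _)
          _ ≤ δ * ‖x‖ := by
              apply mul_le_mul_of_nonneg_left _ (le_of_lt hδpos)
              calc ‖S (j x)‖ ≤ ‖j x‖ := hSz _
                _ = ‖x‖ := hjnorm x
      -- term 3
      have ht3 : ‖S (j x) - T (j x)‖ ≤ δ * ‖x‖ := by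
        calc ‖S (j x) - T (j x)‖ = ‖(S - T) (j x)‖ := by simp
          _ ≤ ‖S - T‖ * ‖j x‖ := (S - T).le_opNorm _
          _ ≤ δ * ‖j x‖ := mul_le_mul_of_nonneg_right (le_of_lt hST) (norm_nonneg _)
          _ = δ * ‖x‖ := by rw [hjnorm]
      calc ‖S₁ x - T₁ x‖ ≤ ‖‖u₁‖ • (S (A x) - S (j x))‖ + ‖(‖u₁‖ - 1) • S (j x)‖
            + ‖S (j x) - T (j x)‖ := by
            rw [hsplit]
            exact norm_add₃_le
        _ ≤ δ * ‖x‖ + δ * ‖x‖ + δ * ‖x‖ := by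
            exact add_le_add (add_le_add ht1 ht2) ht3
        _ = 3 * δ * ‖x‖ := by ring
    have : ‖S₁ - T₁‖ ≤ 3 * δ := by
      apply ContinuousLinearMap.opNorm_le_bound _ (by positivity)
      intro x
      calc ‖(S₁ - T₁) x‖ = ‖S₁ x - T₁ x‖ := by simp
        _ ≤ 3 * δ * ‖x‖ := hkey x
    linarith
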